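/- Suppose Q is in rational normal form with parameters z and k_1,…,k_d, and γ is generic. Let α be a normalized 2-cocycle on g(γ,Q) and write α(m)=α(L_m,L_{−m}). Then for every m∈R, α(m)=((m_γ)^3−m_γ)/6 · α(2k_1e_1), where m_γ=(γ|m)/(γ|k_1e_1). -/

import Mathlib

open scoped BigOperators

namespace QTorus

/-- σ(m,n) = ∏_{i<j} q_{ji}^{m_j n_i}. -/
noncomputable def qsigma (d : ℕ) (Q : Matrix (Fin d) (Fin d) ℂ) (m n : Fin d → ℤ) : ℂ :=
  ∏ i : Fin d, ∏ j : Fin d, if i < j then Q j i ^ (m j * n i) else 1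

/-- The radical subgroup R = {m | σ(m,n)=σ(n,m) for all n}. -/
def Rset (d : ℕ) (Q : Matrix (Fin d) (Fin d) ℂ) : Set (Fin d → ℤ) :=
  {m | ∀ n : Fin d → ℤ, qsigma d Q m n = qsigma d Q n m}

/-- (γ|m) = ∑ γ_i m_i. -/
noncomputable def ip (d : ℕ) (γ : Fin d → ℂ) (m : Fin d → ℤ) : ℂ :=
  ∑ i : Fin d, γ i * (m i : ℂ)

/-- The underlying vector space of g(γ,Q): formal ℂ-linear combinations of basis
vectors indexed by ℤ^d. -/
abbrev g (d : ℕ) := (Fin d → ℤ) →₀ ℂ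

/-- The basis vector L_m. -/
noncomputable def L (d : ℕ) (m : Fin d → ℤ) : g d := Finsupp.single m 1

/-- Hypotheses on the matrix Q: nonzero entries, q_{ii}=1, q_{ij}q_{ji}=1. -/
def QOk (d : ℕ) (Q : Matrix (Fin d) (Fin d) ℂ) : Prop :=
  (∀ i, Q i i = 1) ∧ (∀ i j, Q i j * Q j i = 1) ∧ (∀ i j, Q i j ≠ 0)

/-- γ is generic: γ_1,…,γ_d are linearly independent over ℚ. -/
def Generic (d : ℕ) (γ : Fin d → ℂ) : Prop := LinearIndependent ℚ γ

open Classical in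
/-- Structure constants of g(γ,Q): [L_m, L_n] = sc(m,n) • L_{m+n}. -/
noncomputable def sc (d : ℕ) (Q : Matrix (Fin d) (Fin d) ℂ) (γ : Fin d → ℂ)
    (m n : Fin d → ℤ) : ℂ :=
  if m ∈ Rset d Q then
    (if n ∈ Rset d Q then qsigma d Q m n * ip d γ (n - m)
     else qsigma d Q m n * ip d γ n)
  else
    (if n ∈ Rset d Q then -(qsigma d Q n m * ip d γ m)
     else qsigma d Q m n - qsigma d Q n m)

/-- The bracket of g(γ,Q), as the bilinear extension of
[L_m, L_n] = sc(m,n) • L_{m+n}. -/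
noncomputable def br (d : ℕ) (Q : Matrix (Fin d) (Fin d) ℂ) (γ : Fin d → ℂ)
    (x y : g d) : g d :=
  x.sum fun m a => y.sum fun n b => Finsupp.single (m + n) (a * b * sc d Q γ m n)

/-- A Lie algebra automorphism of g(γ,Q): a linear equivalence preserving the bracket. -/
def IsAut (d : ℕ) (Q : Matrix (Fin d) (Fin d) ℂ) (γ : Fin d → ℂ)
    (θ : g d ≃ₗ[ℂ] g d) : Prop :=
  ∀ x y : g d, θ (br d Q γ x y) = br d Q γ (θ x) (θ y)

/-- A derivation of g(γ,Q). -/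
def IsDer (d : ℕ) (Q : Matrix (Fin d) (Fin d) ℂ) (γ : Fin d → ℂ)
    (D : g d →ₗ[ℂ] g d) : Prop :=
  ∀ x y : g d, D (br d Q γ x y) = br d Q γ (D x) y + br d Q γ x (D y)

open Classical in
/-- δ(n,R) = 1 if n ∈ R, 0 otherwise. -/
noncomputable def deltaR (d : ℕ) (Q : Matrix (Fin d) (Fin d) ℂ) (n : Fin d → ℤ) : ℕ :=
  if n ∈ Rset d Q then 1 else 0

/-- A 2-cocycle on g(γ,Q). -/
def IsCocycle (d : ℕ) (Q : Matrix (Fin d) (Fin d) ℂ) (γ : Fin d → ℂ)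
    (α : g d →ₗ[ℂ] g d →ₗ[ℂ] ℂ) : Prop :=
  (∀ x y : g d, α x y = - α y x) ∧
  (∀ x y z : g d,
    α (br d Q γ x y) z + α (br d Q γ z x) y + α (br d Q γ y z) x = 0)

/-- i ↔ j is one of the exceptional index pairs (2l-1,2l) (1-based) of the rational
normal form. Here indices are 0-based. -/
def OffDiagPair (z : ℕ) (i j : ℕ) : Prop :=
  ∃ l : ℕ, l < z ∧ ((i = 2 * l ∧ j = 2 * l + 1) ∨ (i = 2 * l + 1 ∧ j = 2 * l))

/-- Q is in rational normal form with parameters z and k_1,…,k_d (0-based indexing: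
the paper's pair (2i-1,2i) is the Lean pair (2l, 2l+1) with l = i-1). -/
def IsRNF (d : ℕ) (Q : Matrix (Fin d) (Fin d) ℂ) (z : ℕ) (k : Fin d → ℕ) : Prop :=
  0 < z ∧ 2 * z ≤ d ∧
  (∀ i j : Fin d, ¬ OffDiagPair z i.val j.val → Q i j = 1) ∧
  (∀ (l : ℕ) (_ : l < z) (hi : 2 * l < d) (hj : 2 * l + 1 < d),
      IsPrimitiveRoot (Q ⟨2 * l, hi⟩ ⟨2 * l + 1, hj⟩) (k ⟨2 * l, hi⟩) ∧
      Q ⟨2 * l + 1, hj⟩ ⟨2 * l, hi⟩ = (Q ⟨2 * l, hi⟩ ⟨2 * l + 1, hj⟩)⁻¹ ∧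
      k ⟨2 * l + 1, hj⟩ = k ⟨2 * l, hi⟩ ∧
      1 < k ⟨2 * l, hi⟩) ∧
  (∀ (i : ℕ) (_ : i + 1 < 2 * z) (h1 : i < d) (h2 : i + 1 < d),
      k ⟨i + 1, h2⟩ ∣ k ⟨i, h1⟩) ∧
  (∀ i : Fin d, 2 * z ≤ i.val → k i = 1)

/-- The vector k_1 e_1 ∈ ℤ^d. -/
noncomputable def k1e1 (d : ℕ) (k : Fin d → ℕ) (hd : 0 < d) : Fin d → ℤ :=
  Pi.single ⟨0, hd⟩ (k ⟨0, hd⟩ : ℤ)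

/-- A 2-cocycle is normalized if α(L_{m-k₁e₁}, L_{k₁e₁})=0 for m ∈ R, m ≠ 2k₁e₁,
α(L_0, L_{2k₁e₁})=0, α(L_0, L_s)=0 for s ∉ R, and α(L_m,L_n)=0 whenever m+n ≠ 0. -/
def IsNormalized (d : ℕ) (Q : Matrix (Fin d) (Fin d) ℂ) (k : Fin d → ℕ) (hd : 0 < d)
    (α : g d →ₗ[ℂ] g d →ₗ[ℂ] ℂ) : Prop :=
  (∀ m ∈ Rset d Q, m ≠ 2 • k1e1 d k hd →
      α (L d (m - k1e1 d k hd)) (L d (k1e1 d k hd)) = 0) ∧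
  α (L d 0) (L d (2 • k1e1 d k hd)) = 0 ∧
  (∀ s, s ∉ Rset d Q → α (L d 0) (L d s) = 0) ∧
  (∀ m n : Fin d → ℤ, m + n ≠ 0 → α (L d m) (L d n) = 0)

/-- The degree derivation ∂_i, acting by ∂_i(L_m) = m_i L_m. -/
noncomputable def deg (d : ℕ) (i : Fin d) (y : g d) : g d :=
  y.sum fun m a => Finsupp.single m ((m i : ℂ) * a)

open Classical in
/-- The 2-cocycle α₁: α₁(L_m,L_n) = δ_{m+n,0}((m_γ)³-m_γ)/12 for m ∈ R, 0 otherwise,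
where m_γ = (γ|m)/(γ|k₁e₁). -/
noncomputable def alpha1 (d : ℕ) (Q : Matrix (Fin d) (Fin d) ℂ) (γ : Fin d → ℂ)
    (k : Fin d → ℕ) (hd : 0 < d) (x y : g d) : ℂ :=
  x.sum fun m a => y.sum fun n b => a * b *
    (if m ∈ Rset d Q ∧ m + n = 0 then
       ((ip d γ m / ip d γ (k1e1 d k hd)) ^ 3 - ip d γ m / ip d γ (k1e1 d k hd)) / 12
     else 0)

open Classical in
/-- The 2-cocycle α₂: α₂(L_r,L_s) = δ_{r+s,0} σ(r,-r)(γ|r)/(γ|k₁e₁) for r ∉ R,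
0 otherwise. -/
noncomputable def alpha2 (d : ℕ) (Q : Matrix (Fin d) (Fin d) ℂ) (γ : Fin d → ℂ)
    (k : Fin d → ℕ) (hd : 0 < d) (x y : g d) : ℂ :=
  x.sum fun m a => y.sum fun n b => a * b *
    (if m ∉ Rset d Q ∧ m + n = 0 then
       qsigma d Q m (-m) * (ip d γ m / ip d γ (k1e1 d k hd))
     else 0)

end QTorus

open QTorus

namespace QTorus
variable {d : ℕ} {Q : Matrix (Fin d) (Fin d) ℂ} {γ : Fin d → ℂ}

lemma ip_add (m n : Fin d → ℤ) : ip d γ (m + n) = ip d γ m + ip d γ n := by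
  simp [ip, Pi.add_apply, mul_add, Finset.sum_add_distrib]

lemma ip_neg (m : Fin d → ℤ) : ip d γ (-m) = - ip d γ m := by
  simp [ip, Finset.sum_neg_distrib]

lemma ip_sub (m n : Fin d → ℤ) : ip d γ (m - n) = ip d γ m - ip d γ n := by
  rw [sub_eq_add_neg, ip_add, ip_neg, sub_eq_add_neg]

lemma qsigma_add_left (hQ : ∀ i j, Q i j ≠ 0) (m n p : Fin d → ℤ) :
    qsigma d Q (m + n) p = qsigma d Q m p * qsigma d Q n p := by
  rw [qsigma, qsigma, qsigma, ← Finset.prod_mul_distrib]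
  refine Finset.prod_congr rfl fun i _ => ?_
  rw [← Finset.prod_mul_distrib]
  refine Finset.prod_congr rfl fun j _ => ?_
  split_ifs with h
  · rw [Pi.add_apply, add_mul, zpow_add₀ (hQ j i)]
  · rw [one_mul]

lemma qsigma_add_right (hQ : ∀ i j, Q i j ≠ 0) (m n p : Fin d → ℤ) :
    qsigma d Q p (m + n) = qsigma d Q p m * qsigma d Q p n := by
  rw [qsigma, qsigma, qsigma, ← Finset.prod_mul_distrib]
  refine Finset.prod_congr rfl fun i _ => ?_
  rw [← Finset.prod_mul_distrib]
  refine Finset.prod_congr rfl fun j _ => ?_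
  split_ifs with h
  · rw [Pi.add_apply, mul_add, zpow_add₀ (hQ j i)]
  · rw [one_mul]

lemma qsigma_neg_left (m p : Fin d → ℤ) :
    qsigma d Q (-m) p = (qsigma d Q m p)⁻¹ := by
  rw [qsigma, qsigma, ← Finset.prod_inv_distrib]
  refine Finset.prod_congr rfl fun i _ => ?_
  rw [← Finset.prod_inv_distrib]
  refine Finset.prod_congr rfl fun j _ => ?_
  split_ifs with h
  · rw [Pi.neg_apply, neg_mul, zpow_neg]
  · rw [inv_one]

lemma qsigma_neg_right (m p : Fin d → ℤ) :
    qsigma d Q p (-m) = (qsigma d Q p m)⁻¹ := by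
  rw [qsigma, qsigma, ← Finset.prod_inv_distrib]
  refine Finset.prod_congr rfl fun i _ => ?_
  rw [← Finset.prod_inv_distrib]
  refine Finset.prod_congr rfl fun j _ => ?_
  split_ifs with h
  · rw [Pi.neg_apply, mul_neg, zpow_neg]
  · rw [inv_one]

lemma Rset_add (hQ : ∀ i j, Q i j ≠ 0) {m n : Fin d → ℤ}
    (hm : m ∈ Rset d Q) (hn : n ∈ Rset d Q) : m + n ∈ Rset d Q := by
  intro p
  rw [qsigma_add_left hQ, qsigma_add_right hQ, hm p, hn p]

lemma Rset_neg {m : Fin d → ℤ} (hm : m ∈ Rset d Q) : -m ∈ Rset d Q := by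
  intro p
  rw [qsigma_neg_left, qsigma_neg_right, hm p]

lemma Rset_zero : (0 : Fin d → ℤ) ∈ Rset d Q := by
  intro p
  simp [qsigma]

end QTorus
namespace QTorus
variable {d : ℕ} {Q : Matrix (Fin d) (Fin d) ℂ} {γ : Fin d → ℂ} {z : ℕ} {k : Fin d → ℕ}

lemma dvd_odd_of_mem (hRNF : IsRNF d Q z k) {m : Fin d → ℤ} (hm : m ∈ Rset d Q)
    (l : ℕ) (hl : l < z) (hj : 2*l+1 < d) :
    (k ⟨2*l, by omega⟩ : ℤ) ∣ m ⟨2*l+1, hj⟩ := by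
  obtain ⟨hz, hzd, hone, hpair, hdvd, hk1⟩ := hRNF
  have hi : 2*l < d := by omega
  set i0 : Fin d := ⟨2*l, hi⟩ with hi0
  set j0 : Fin d := ⟨2*l+1, hj⟩ with hj0
  have h := hm (Pi.single i0 1)
  have hL : qsigma d Q m (Pi.single i0 1) = Q j0 i0 ^ (m j0) := by
    rw [qsigma, Fintype.prod_eq_single i0 ?houter, Fintype.prod_eq_single j0 ?hinner]
    · rw [if_pos (by simp [hi0, hj0, Fin.lt_def]), Pi.single_eq_same, mul_one]
    case houter =>
      intro i hine
      rw [Pi.single_eq_of_ne hine]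
      simp
    case hinner =>
      intro j hjne
      by_cases hij : i0 < j
      · rw [if_pos hij, hone j i0 ?_, one_zpow]
        rintro ⟨l', hl', ⟨h1, h2⟩ | ⟨h1, h2⟩⟩
        · simp only [hi0] at h2; omega
        · exact hjne (by apply Fin.ext; simp only [hj0]; simp only [hi0] at h2; omega)
      · rw [if_neg hij]
  have hR : qsigma d Q (Pi.single i0 1) m = 1 := by
    rw [qsigma]
    refine Finset.prod_eq_one fun i _ => Finset.prod_eq_one fun j _ => ?_
    by_cases hij : i < j
    · rw [if_pos hij]
      by_cases hji0 : j = i0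
      · rw [hone j i ?_, one_zpow]
        rintro ⟨l', hl', ⟨h1, h2⟩ | ⟨h1, h2⟩⟩
        · subst hji0
          have e0 : (i0:ℕ) = 2*l := rfl
          have e1 := Fin.lt_def.mp hij; omega
        · subst hji0
          have e0 : (i0:ℕ) = 2*l := rfl; omega
      · rw [Pi.single_eq_of_ne hji0, zero_mul, zpow_zero]
    · rw [if_neg hij]
  rw [hL, hR] at h
  have hprim := (hpair l hl hi hj).1
  have hqinv : Q j0 i0 = (Q i0 j0)⁻¹ := (hpair l hl hi hj).2.1
  rw [hqinv] at h
  exact (hprim.inv.zpow_eq_one_iff_dvd _).mp h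

lemma qsigma_one_of_mem (hRNF : IsRNF d Q z k) {m : Fin d → ℤ} (hm : m ∈ Rset d Q)
    (n : Fin d → ℤ) : qsigma d Q m n = 1 := by
  have hone := hRNF.2.2.1
  rw [qsigma]
  refine Finset.prod_eq_one fun i _ => Finset.prod_eq_one fun j _ => ?_
  by_cases hij : i < j
  · rw [if_pos hij]
    by_cases hodp : OffDiagPair z j.val i.val
    · obtain ⟨l, hl, ⟨h1, h2⟩ | ⟨h1, h2⟩⟩ := hodp
      · exfalso; have := Fin.lt_def.mp hij; omega
      · have hj2 : 2*l+1 < d := by omega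
        have hi2 : 2*l < d := by omega
        have hjj : j = ⟨2*l+1, hj2⟩ := Fin.ext h1
        have hii : i = ⟨2*l, hi2⟩ := Fin.ext h2
        have hdvd := dvd_odd_of_mem hRNF hm l hl hj2
        obtain ⟨hz, hzd, hone, hpair, _, _⟩ := hRNF
        have hprim := (hpair l hl hi2 hj2).1
        have hqinv := (hpair l hl hi2 hj2).2.1
        rw [hjj, hii, hqinv, hprim.inv.zpow_eq_one_iff_dvd]
        exact Dvd.dvd.mul_right hdvd _
    · rw [hone j i hodp, one_zpow]
  · rw [if_neg hij]

end QTorus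
namespace QTorus
variable {d : ℕ} {Q : Matrix (Fin d) (Fin d) ℂ} {γ : Fin d → ℂ} {z : ℕ} {k : Fin d → ℕ}

lemma k1e1_mem (hd1 : 1 < d) (hd : 0 < d) (hRNF : IsRNF d Q z k) :
    k1e1 d k hd ∈ Rset d Q := by
  have hone := hRNF.2.2.1
  have hz := hRNF.1
  intro n
  set i0 : Fin d := ⟨0, hd⟩ with hi0
  have hL : qsigma d Q (k1e1 d k hd) n = 1 := by
    rw [qsigma]
    refine Finset.prod_eq_one fun i _ => Finset.prod_eq_one fun j _ => ?_
    by_cases hij : i < j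
    · rw [if_pos hij]
      by_cases hji0 : j = i0
      · exfalso
        have e0 : (i0:ℕ) = 0 := rfl
        have e1 := Fin.lt_def.mp hij
        subst hji0; omega
      · rw [k1e1, Pi.single_eq_of_ne hji0, zero_mul, zpow_zero]
    · rw [if_neg hij]
  have hR : qsigma d Q n (k1e1 d k hd) = 1 := by
    rw [qsigma]
    refine Finset.prod_eq_one fun i _ => Finset.prod_eq_one fun j _ => ?_
    by_cases hij : i < j
    · rw [if_pos hij]
      by_cases hii0 : i = i0
      · subst hii0
        by_cases hodp : OffDiagPair z j.val i0.val
        · obtain ⟨l', hl', ⟨h1, h2⟩ | ⟨h1, h2⟩⟩ := hodp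
          · exfalso; have e0 : (i0:ℕ) = 0 := rfl; omega
          · have e0 : (i0:ℕ) = 0 := rfl
            have hl0 : l' = 0 := by omega
            subst hl0
            have hii : i0 = ⟨2*0, by omega⟩ := rfl
            have hjj : j = ⟨2*0+1, by omega⟩ := Fin.ext h1
            have hpair := hRNF.2.2.2.1 0 hz (by omega) (by omega)
            rw [hii, hjj, hpair.2.1, (hpair.1.inv.zpow_eq_one_iff_dvd _)]
            rw [k1e1]
            have hs : (Pi.single (⟨0,hd⟩ : Fin d) ((k ⟨0,hd⟩ : ℤ)) : Fin d → ℤ) ⟨2*0, by omega⟩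
                = (k ⟨0,hd⟩ : ℤ) := by
              rw [Pi.single_apply]; exact if_pos (Fin.ext rfl)
            rw [hs]
            exact dvd_mul_left _ _
        · rw [hone j i0 hodp, one_zpow]
      · rw [k1e1, Pi.single_eq_of_ne hii0, mul_zero, zpow_zero]
    · rw [if_neg hij]
  rw [hL, hR]

end QTorus
namespace QTorus
variable {d : ℕ} {Q : Matrix (Fin d) (Fin d) ℂ} {γ : Fin d → ℂ} {z : ℕ} {k : Fin d → ℕ}

lemma br_L (a b : Fin d → ℤ) :
    br d Q γ (L d a) (L d b) = Finsupp.single (a + b) (sc d Q γ a b) := by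
  rw [br]
  simp only [L]
  rw [Finsupp.sum_single_index (by simp), Finsupp.sum_single_index (by simp)]
  rw [one_mul, one_mul]

lemma single_eq_smul_L (v : Fin d → ℤ) (c : ℂ) :
    Finsupp.single v c = c • L d v := by
  rw [L, Finsupp.smul_single, smul_eq_mul, mul_one]

lemma coc3 {α : g d →ₗ[ℂ] g d →ₗ[ℂ] ℂ} (hα : IsCocycle d Q γ α) (a b c : Fin d → ℤ) :
    sc d Q γ a b * α (L d (a+b)) (L d c) + sc d Q γ c a * α (L d (c+a)) (L d b)
      + sc d Q γ b c * α (L d (b+c)) (L d a) = 0 := by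
  have h := hα.2 (L d a) (L d b) (L d c)
  rw [br_L, br_L, br_L, single_eq_smul_L, single_eq_smul_L, single_eq_smul_L] at h
  simpa only [map_smul, LinearMap.smul_apply, smul_eq_mul] using h

lemma sc_R (hRNF : IsRNF d Q z k) {m n : Fin d → ℤ}
    (hm : m ∈ Rset d Q) (hn : n ∈ Rset d Q) :
    sc d Q γ m n = ip d γ (n - m) := by
  rw [sc, if_pos hm, if_pos hn, qsigma_one_of_mem hRNF hm, one_mul]

lemma star (hQ : QOk d Q) (hRNF : IsRNF d Q z k)
    {α : g d →ₗ[ℂ] g d →ₗ[ℂ] ℂ} (hα : IsCocycle d Q γ α)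
    {m n : Fin d → ℤ} (hm : m ∈ Rset d Q) (hn : n ∈ Rset d Q) :
    (ip d γ n - ip d γ m) * α (L d (m+n)) (L d (-(m+n)))
      - (2 * ip d γ m + ip d γ n) * α (L d n) (L d (-n))
      + (ip d γ m + 2 * ip d γ n) * α (L d m) (L d (-m)) = 0 := by
  have hQ0 := hQ.2.2
  have hp : -(m+n) ∈ Rset d Q := Rset_neg (Rset_add hQ0 hm hn)
  have h := coc3 hα m n (-(m+n))
  have e1 : -(m+n) + m = -n := by abel
  have e2 : n + -(m+n) = -m := by abel
  rw [e1, e2, sc_R hRNF hm hn, sc_R hRNF hp hm, sc_R hRNF hn hp] at h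
  rw [hα.1 (L d (-n)) (L d n), hα.1 (L d (-m)) (L d m)] at h
  have v1 : ip d γ (n - m) = ip d γ n - ip d γ m := ip_sub n m
  have v2 : ip d γ (m - -(m+n)) = 2 * ip d γ m + ip d γ n := by
    rw [ip_sub, ip_neg, ip_add]; ring
  have v3 : ip d γ (-(m+n) - n) = -(ip d γ m + 2 * ip d γ n) := by
    rw [ip_sub, ip_neg, ip_add]; ring
  rw [v1, v2, v3] at h
  linear_combination h

end QTorus



/-- for Q in rational normal form, γ generic, and α a normalized
2-cocycle on g(γ,Q), writing α(m) = α(L_m, L_{-m}), for every m ∈ R one has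
α(m) = ((m_γ)³ − m_γ)/6 · α(2k₁e₁), where m_γ = (γ|m)/(γ|k₁e₁). -/
theorem stmt14 (d : ℕ) (hd1 : 1 < d) (hd : 0 < d)
    (Q : Matrix (Fin d) (Fin d) ℂ) (hQ : QOk d Q)
    (z : ℕ) (k : Fin d → ℕ) (hRNF : IsRNF d Q z k)
    (γ : Fin d → ℂ) (hγ : Generic d γ)
    (α : g d →ₗ[ℂ] g d →ₗ[ℂ] ℂ) (hα : IsCocycle d Q γ α)
    (hnorm : IsNormalized d Q k hd α) :
    ∀ m ∈ Rset d Q,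
      α (L d m) (L d (-m)) =
        (((ip d γ m / ip d γ (k1e1 d k hd)) ^ 3 -
            ip d γ m / ip d γ (k1e1 d k hd)) / 6) *
          α (L d (2 • k1e1 d k hd)) (L d (-(2 • k1e1 d k hd))) := by
  intro m hm
  set e : Fin d → ℤ := k1e1 d k hd with he_def
  have he : e ∈ Rset d Q := k1e1_mem hd1 hd hRNF
  have hme : m + e ∈ Rset d Q := Rset_add hQ.2.2 hm he
  have hee : e + e ∈ Rset d Q := Rset_add hQ.2.2 he he
  have hpair0 := hRNF.2.2.2.1 0 hRNF.1 (by omega) (by omega)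
  have hk0 : 1 < k ⟨0, hd⟩ := hpair0.2.2.2
  have h0ne : (0 : Fin d → ℤ) ≠ 2 • e := by
    intro h
    have h2 := congrFun h ⟨0, hd⟩
    rw [he_def] at h2
    simp [k1e1] at h2
    omega
  have hue : α (L d e) (L d (-e)) = 0 := by
    have h := hnorm.1 0 Rset_zero h0ne
    rw [zero_sub] at h
    rw [hα.1 (L d e) (L d (-e)), h, neg_zero]
  have ht : ip d γ e ≠ 0 := by
    have hγ0 : γ ⟨0, hd⟩ ≠ 0 := hγ.ne_zero ⟨0, hd⟩
    have hipe : ip d γ e = γ ⟨0, hd⟩ * ((k ⟨0, hd⟩ : ℤ) : ℂ) := by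
      rw [he_def, k1e1, ip]
      rw [Fintype.sum_eq_single ⟨0, hd⟩ (fun i hi => by
        rw [Pi.single_eq_of_ne hi]; simp)]
      rw [Pi.single_eq_same]
    rw [hipe]
    refine mul_ne_zero hγ0 ?_
    exact_mod_cast (by omega : (k ⟨0, hd⟩ : ℤ) ≠ 0)
  have E1 := star hQ hRNF hα hm he
  have E2 := star hQ hRNF hα hme he
  have E3 := star hQ hRNF hα hm hee
  rw [add_assoc] at E2
  simp only [ip_add] at E2 E3
  rw [hue] at E1 E2
  have key : 12 * ip d γ e ^ 3 * α (L d m) (L d (-m))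
      = 2 * ((ip d γ m) ^ 3 - (ip d γ e) ^ 2 * ip d γ m) *
          α (L d (e + e)) (L d (-(e + e))) := by
    linear_combination
      (-((ip d γ m - 2 * ip d γ e) * (ip d γ m + 3 * ip d γ e))) * E1 +
      (-((ip d γ m - ip d γ e) * (ip d γ m - 2 * ip d γ e))) * E2 +
      (ip d γ m * (ip d γ m - ip d γ e)) * E3
  rw [two_nsmul]
  have h6t : (6 : ℂ) * (ip d γ e) ^ 3 ≠ 0 :=
    mul_ne_zero (by norm_num) (pow_ne_zero 3 ht)
  have expand : ((ip d γ m / ip d γ e) ^ 3 - ip d γ m / ip d γ e) / 6 *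
        α (L d (e + e)) (L d (-(e + e)))
      = ((ip d γ m) ^ 3 - (ip d γ e) ^ 2 * ip d γ m) *
          α (L d (e + e)) (L d (-(e + e))) / (6 * (ip d γ e) ^ 3) := by
    field_simp
  rw [expand, eq_div_iff h6t]
  linear_combination key / 2
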